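/- arXiv:cs/0608095 — 4 statements merged into one kernel-verified Lean document; each statement's English description precedes it below -/
import Mathlib

section
/- If Φ is a connected set of computers and its closure of universal computers Φ̄^U := {C : C emulates every D ∈ Φ, and some X ∈ Φ emulates C} has at least 2 elements, then Φ̄^U is branching: for every C ∈ Φ̄^U, (i) if C →(x⊗y) D with D ∈ Φ̄^U then (C →x) ∈ Φ̄^U, and (ii) there exists a nonempty string x with (C →x) ∈ Φ̄^U. -/
open scoped Classical

/-- Binary strings. -/
abbrev Str := List Bool

/-- A computer: a partial function on binary strings (`none` = undefined). -/
abbrev Computer := Str → Option Str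

/-- `C` emulates `D` via the string `x`: `C (x ⊗ s) = D s` for all `s`. -/
def emulates (C D : Computer) (x : Str) : Prop := ∀ s : Str, C (x ++ s) = D s

/-- The computer `C →x`, i.e. `s ↦ C (x ⊗ s)`. -/
def shiftC (C : Computer) (x : Str) : Computer := fun s => C (x ++ s)

/-- `C` emulates `D` via some string. -/
def emu (C D : Computer) : Prop := ∃ x : Str, emulates C D x

/-- `Φ` is connected: some `U ∈ Φ` emulates every member of `Φ`. -/
def Connected (Φ : Set Computer) : Prop := ∃ U ∈ Φ, ∀ X ∈ Φ, emu U X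

/-- The set `Φ^U` of `Φ`-universal computers. -/
def univSet (Φ : Set Computer) : Set Computer := {U | U ∈ Φ ∧ ∀ X ∈ Φ, emu U X}

/-- The closure `Φ̄^U`: computers emulating every member of `Φ` and emulated by some member of `Φ`. -/
def closureU (Φ : Set Computer) : Set Computer :=
  {C | (∀ D ∈ Φ, emu C D) ∧ ∃ X ∈ Φ, emu X C}

/-- A branching set of computers. -/
def Branching (Φ : Set Computer) : Prop :=
  ∀ C ∈ Φ, (∀ x y : Str, shiftC C (x ++ y) ∈ Φ → shiftC C x ∈ Φ) ∧
    ∃ x : Str, x ≠ [] ∧ shiftC C x ∈ Φ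

/-- If `Φ` is connected and `Φ̄^U` has at least two elements, then `Φ̄^U` is branching. -/
theorem closureU_branching (Φ : Set Computer) (hconn : Connected Φ)
    (h2 : (closureU Φ).Nontrivial) : Branching (closureU Φ) := by
  intro C hC
  obtain ⟨hCem, X, hXΦ, hXC⟩ := hC
  constructor
  · rintro x y ⟨hxyem, _⟩
    refine ⟨?_, X, hXΦ, ?_⟩
    · intro D hD
      obtain ⟨z, hz⟩ := hxyem D hD
      exact ⟨y ++ z, fun s => by
        have := hz s
        simpa [shiftC, List.append_assoc] using this⟩
    · obtain ⟨w, hw⟩ := hXC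
      exact ⟨w ++ x, fun s => by
        have := hw (x ++ s)
        simpa [shiftC, List.append_assoc] using this⟩
  · -- pick D ∈ closureU Φ with D ≠ C
    obtain ⟨a, ha, b, hb, hab⟩ := h2
    obtain ⟨D, hD, hDC⟩ : ∃ D ∈ closureU Φ, D ≠ C := by
      by_cases h : a = C
      · exact ⟨b, hb, by simp [← h, Ne.symm hab]⟩
      · exact ⟨a, ha, h⟩
    obtain ⟨hDem, Y, hYΦ, hYD⟩ := hD
    obtain ⟨x₁, hx₁⟩ := hCem Y hYΦ
    obtain ⟨x₂, hx₂⟩ := hYD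
    have hshift : shiftC C (x₁ ++ x₂) = D := by
      funext s
      have h1 := hx₁ (x₂ ++ s)
      have h2' := hx₂ s
      simp only [shiftC, List.append_assoc]
      rw [h1, h2']
    refine ⟨x₁ ++ x₂, ?_, ?_⟩
    · intro hnil
      apply hDC
      rw [← hshift, hnil]
      funext s; simp [shiftC]
    · rw [hshift]
      exact ⟨hDem, Y, hYΦ, x₂, hx₂⟩
end

section
/- Chapman–Kolmogorov for emulation: if Φ is branching and C, D ∈ Φ, then for all m, n ≥ 0, μ_C^{(m+n)}(D|Φ) = Σ_{X ∈ Φ} μ_C^{(m)}(X|Φ) · μ_X^{(n)}(D|Φ). -/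
open scoped Classical

/-- The `Φ`-tree of `C`: inputs making `C` emulate a member of `Φ`. -/
def tree (Φ : Set Computer) (C : Computer) : Set Str := {x | shiftC C x ∈ Φ}

/-- Helper for path probability, recursing over the reversed path. -/
noncomputable def pathProbAux (T : Set Str) : Str → ℝ
  | [] => 1
  | b :: r => if r.reverse ++ [!b] ∈ T then pathProbAux T r / 2 else pathProbAux T r

/-- Path probability on the tree `T`: `μ(λ) = 1`, and the probability halves
exactly at binary branch points (where the sibling node is also in `T`). -/
noncomputable def pathProb (T : Set Str) (x : Str) : ℝ := pathProbAux T x.reverse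

/-- The `n`-step computer probability `μ_C^{(n)}(D|Φ)`: probability of arriving
at the computer `D` after `n` steps of the random walk on the `Φ`-tree of `C`. -/
noncomputable def nstep (Φ : Set Computer) (C D : Computer) (n : ℕ) : ℝ :=
  ∑' x : {x : Str // x.length = n ∧ shiftC C x = D}, pathProb (tree Φ C) (x : Str)

lemma shiftC_shiftC (C : Computer) (y z : Str) : shiftC (shiftC C y) z = shiftC C (y ++ z) := by
  funext t; simp [shiftC, List.append_assoc]

lemma tree_shift (Φ : Set Computer) (C : Computer) (y : Str) :
    tree Φ (shiftC C y) = {s | y ++ s ∈ tree Φ C} := by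
  ext s; simp [tree, shiftC_shiftC]

lemma pathProbAux_append (T : Set Str) (y : Str) :
    ∀ w : Str, pathProbAux T (w ++ y.reverse)
      = pathProbAux {s | y ++ s ∈ T} w * pathProbAux T y.reverse
  | [] => by simp [pathProbAux]
  | b :: r => by
    have h : (r ++ y.reverse).reverse ++ [!b] = y ++ (r.reverse ++ [!b]) := by
      simp
    simp only [List.cons_append, pathProbAux, List.append_eq, h,
      pathProbAux_append T y r, Set.mem_setOf_eq]
    by_cases hm : y ++ (r.reverse ++ [!b]) ∈ T
    · simp only [if_pos hm]; ring
    · simp only [if_neg hm]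

lemma pathProb_append (T : Set Str) (y z : Str) :
    pathProb T (y ++ z) = pathProb {s | y ++ s ∈ T} z * pathProb T y := by
  unfold pathProb
  rw [List.reverse_append]
  exact pathProbAux_append T y z.reverse

/-- Strings of length `n` satisfying `P`, as a subtype, are equivalent to the
corresponding subtype of vectors. -/
def lenEquiv (n : ℕ) (P : Str → Prop) :
    {x : Str // x.length = n ∧ P x} ≃ {v : List.Vector Bool n // P v.1} where
  toFun s := ⟨⟨s.1, s.2.1⟩, s.2.2⟩
  invFun t := ⟨t.1.1, t.1.2, t.2⟩
  left_inv s := rfl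
  right_inv t := rfl

noncomputable instance nstepFintype (n : ℕ) (P : Str → Prop) :
    Fintype {x : Str // x.length = n ∧ P x} := by
  have : Finite {x : Str // x.length = n ∧ P x} :=
    Finite.of_equiv _ (lenEquiv n P).symm
  exact Fintype.ofFinite _

lemma sum_len (n : ℕ) (P : Str → Prop) (f : Str → ℝ) :
    ∑ x : {x : Str // x.length = n ∧ P x}, f x.1
      = ∑ v : List.Vector Bool n, if P v.1 then f v.1 else 0 := by
  classical
  rw [← Finset.sum_filter, ← Finset.sum_subtype_eq_sum_filter, Finset.subtype_univ]
  exact Fintype.sum_equiv (lenEquiv n P) _ _ (fun s => rfl)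

lemma nstep_eq (Φ : Set Computer) (C D : Computer) (n : ℕ) :
    nstep Φ C D n = ∑ v : List.Vector Bool n,
      if shiftC C v.1 = D then pathProb (tree Φ C) v.1 else 0 := by
  rw [nstep, tsum_fintype]
  exact sum_len n _ _

lemma nstep_eq_zero {Φ : Set Computer} {X D : Computer} {n : ℕ}
    (h : ∀ z : Str, z.length = n → shiftC X z ≠ D) : nstep Φ X D n = 0 := by
  have : IsEmpty {x : Str // x.length = n ∧ shiftC X x = D} :=
    ⟨fun s => h s.1 s.2.1 s.2.2⟩
  rw [nstep, tsum_empty]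

/-- Splitting a vector of length `m + n` into its first `m` and last `n` entries. -/
def vecSplit (m n : ℕ) : List.Vector Bool (m + n) ≃
    List.Vector Bool m × List.Vector Bool n where
  toFun w := (⟨w.1.take m, by rw [List.length_take, w.2]; omega⟩,
    ⟨w.1.drop m, by rw [List.length_drop, w.2]; omega⟩)
  invFun p := ⟨p.1.1 ++ p.2.1, by rw [List.length_append, p.1.2, p.2.2]⟩
  left_inv w := Subtype.ext (List.take_append_drop m w.1)
  right_inv p := by
    ext : 1
    · exact Subtype.ext (by simp [List.take_append_of_le_length, p.1.2.le,
        List.take_of_length_le, p.1.2])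
    · exact Subtype.ext (by simp [p.1.2])

/-- Chapman–Kolmogorov equation for the emulation Markov process:
`μ_C^{(m+n)}(D|Φ) = Σ_{X ∈ Φ} μ_C^{(m)}(X|Φ) · μ_X^{(n)}(D|Φ)`. -/
theorem chapman_kolmogorov (Φ : Set Computer) (hb : Branching Φ)
    (C D : Computer) (hC : C ∈ Φ) (hD : D ∈ Φ) (m n : ℕ) :
    nstep Φ C D (m + n) = ∑' X : Φ, nstep Φ C (X : Computer) m * nstep Φ (X : Computer) D n := by
  classical
  set h : Computer → ℝ := fun X => nstep Φ X D n with hh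
  set μ : Str → ℝ := pathProb (tree Φ C) with hμ
  -- vanishing of the inner step off Φ
  have key : ∀ y : Str, shiftC C y ∉ Φ → nstep Φ (shiftC C y) D n = 0 := by
    intro y hyΦ
    apply nstep_eq_zero
    intro z _ hzD
    rw [shiftC_shiftC] at hzD
    exact hyΦ ((hb C hC).1 y z (by rw [hzD]; exact hD))
  -- LHS computation
  have hLHS : nstep Φ C D (m + n)
      = ∑ y : List.Vector Bool m, Φ.indicator h (shiftC C y.1) * μ y.1 := by
    rw [nstep_eq, ← Equiv.sum_comp (vecSplit m n).symm
      (fun w => if shiftC C w.1 = D then μ w.1 else 0), Fintype.sum_prod_type]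
    refine Finset.sum_congr rfl fun y _ => ?_
    have step : ∀ z : List.Vector Bool n,
        (if shiftC C ((vecSplit m n).symm (y, z)).1 = D
          then μ ((vecSplit m n).symm (y, z)).1 else 0)
        = (if shiftC (shiftC C y.1) z.1 = D
            then pathProb (tree Φ (shiftC C y.1)) z.1 else 0) * μ y.1 := by
      intro z
      have hval : ((vecSplit m n).symm (y, z)).1 = y.1 ++ z.1 := rfl
      rw [hval, hμ, pathProb_append, ← tree_shift, ← shiftC_shiftC, ite_mul, zero_mul]
    rw [Finset.sum_congr rfl fun z _ => step z, ← Finset.sum_mul, ← nstep_eq]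
    by_cases hyΦ : shiftC C y.1 ∈ Φ
    · rw [Set.indicator_of_mem hyΦ]
    · rw [Set.indicator_of_notMem hyΦ, key y.1 hyΦ]
  -- RHS computation
  set T : Finset Computer :=
    Finset.univ.image (fun y : List.Vector Bool m => shiftC C y.1) with hT
  have hRHS : ∑' X : Φ, nstep Φ C (X : Computer) m * nstep Φ (X : Computer) D n
      = ∑ X ∈ T, Set.indicator Φ (fun X => nstep Φ C X m * h X) X := by
    refine (tsum_subtype Φ (fun X => nstep Φ C X m * h X)).trans (tsum_eq_sum ?_)
    intro X hX
    by_cases hXΦ : X ∈ Φ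
    · rw [Set.indicator_of_mem hXΦ]
      have : nstep Φ C X m = 0 := by
        apply nstep_eq_zero
        intro y hy hyX
        exact hX (Finset.mem_image.2 ⟨⟨y, hy⟩, Finset.mem_univ _, hyX⟩)
      rw [this, zero_mul]
    · exact Set.indicator_of_notMem hXΦ _
  rw [hLHS, hRHS]
  have ind_eq : ∀ X : Computer, Set.indicator Φ (fun X => nstep Φ C X m * h X) X
      = nstep Φ C X m * Set.indicator Φ h X := by
    intro X
    by_cases hXΦ : X ∈ Φ
    · rw [Set.indicator_of_mem hXΦ, Set.indicator_of_mem hXΦ]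
    · rw [Set.indicator_of_notMem hXΦ, Set.indicator_of_notMem hXΦ, mul_zero]
  simp only [ind_eq]
  rw [Finset.sum_congr rfl (fun (X : Computer) (_ : X ∈ T) => by
      rw [nstep_eq Φ C X m, Finset.sum_mul]),
    Finset.sum_comm]
  refine Finset.sum_congr rfl fun (y : List.Vector Bool m) _ => ?_
  have : ∀ X ∈ T, (if shiftC C y.1 = X then μ y.1 else 0) * Set.indicator Φ h X
      = if shiftC C y.1 = X then μ y.1 * Set.indicator Φ h X else 0 := by
    intro X _; rw [ite_mul, zero_mul]
  rw [Finset.sum_congr rfl this, Finset.sum_ite_eq T (shiftC C y.1)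
    (fun X => μ y.1 * Set.indicator Φ h X),
    if_pos (Finset.mem_image.2 ⟨y, Finset.mem_univ _, rfl⟩), mul_comm]
end

section
/- The set Ξ^U of all universal computers is aperiodic: there exists V ∈ Ξ^U with μ_V^{(1)}(V | Ξ^U) > 0, i.e., V emulates itself via a single bit. -/
open scoped Classical

/-- A computer is partial recursive if the corresponding partial function is `Partrec`. -/
def isPR (C : Computer) : Prop := Partrec (fun x => Part.ofOption (C x))

/-- `Ξ^U`: the set of universal computers, i.e. partial recursive computers that
emulate every (partial recursive) computer via some string. -/
def XiU : Set Computer := {C | isPR C ∧ ∀ M : Computer, isPR M → emu C M}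

def dw : Str → Str
  | [] => []
  | b :: s => bif b then b :: s else dw s

theorem dw_false (s : Str) : dw (false :: s) = dw s := rfl
theorem dw_true (s : Str) : dw (true :: s) = true :: s := rfl

theorem dw_replicate (k : ℕ) (s : Str) :
    dw (List.replicate k false ++ true :: s) = true :: s := by
  induction k with
  | zero => rfl
  | succ n ih => simpa [List.replicate_succ, dw_false] using ih

theorem dw_primrec : Primrec dw := by
  have h : Primrec₂ (fun (_ : Str) (p : Bool × Str × Str) => bif p.1 then p.1 :: p.2.1 else p.2.2) :=
    Primrec.cond (Primrec.fst.comp .snd)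
      (Primrec.list_cons.comp (Primrec.fst.comp .snd) (Primrec.fst.comp (Primrec.snd.comp .snd)))
      (Primrec.snd.comp (Primrec.snd.comp .snd))
  have := Primrec.list_rec (Primrec.id (α := Str)) (Primrec.const ([] : Str)) h
  refine this.of_eq fun s => ?_
  induction s with
  | nil => rfl
  | cons b t ih =>
    cases b
    · exact ih
    · rfl

def parse (s : Str) : Option (ℕ × Str) :=
  List.casesOn (dw s) none (fun _ t => some (s.length - t.length - 1, t))

theorem parse_primrec : Primrec parse := by
  have h : Primrec₂ (fun (s : Str) (p : Bool × Str) =>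
      (some (s.length - p.2.length - 1, p.2) : Option (ℕ × Str))) :=
    Primrec.option_some.comp <|
      Primrec.pair
        (Primrec.nat_sub.comp
          (Primrec.nat_sub.comp (Primrec.list_length.comp .fst)
            (Primrec.list_length.comp (Primrec.snd.comp .snd)))
          (Primrec.const 1))
        (Primrec.snd.comp .snd)
  exact Primrec.list_casesOn dw_primrec (Primrec.const none) h

theorem dw_length (s : Str) : (dw s).length ≤ s.length := by
  induction s with
  | nil => exact le_refl _
  | cons b t ih =>
    cases b
    · exact le_trans ih (Nat.le_succ _)
    · exact le_refl _

theorem parse_false (s : Str) : parse (false :: s) = (parse s).map (fun p => (p.1 + 1, p.2)) := by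
  unfold parse
  rw [dw_false]
  cases h : dw s with
  | nil => rfl
  | cons a t =>
    simp only [Option.map_some]
    have hlen : t.length + 1 ≤ s.length := by
      have h2 := dw_length s
      rw [h] at h2
      simpa using h2
    have harith : (false :: s).length - t.length - 1 = s.length - t.length - 1 + 1 := by
      simp only [List.length_cons]; omega
    rw [harith]

theorem parse_replicate (k : ℕ) (s : Str) :
    parse (List.replicate k false ++ true :: s) = some (k, s) := by
  unfold parse
  rw [dw_replicate]
  have harith : (List.replicate k false ++ true :: s).length - s.length - 1 = k := by
    simp only [List.length_append, List.length_replicate, List.length_cons]; omega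
  show some _ = _
  rw [harith]

open Nat.Partrec (Code)

/-- The universal partial function. -/
noncomputable def fU : Str →. Str := fun s =>
  (Part.ofOption (parse s)).bind fun kt =>
    ((Denumerable.ofNat Code kt.1).eval (Encodable.encode kt.2)).bind fun n =>
      Part.ofOption (Encodable.decode (α := Str) n)

theorem fU_partrec : Partrec fU := by
  refine (Computable.ofOption parse_primrec.to_comp).bind ?_
  refine Partrec.bind ?_ ?_
  · exact Nat.Partrec.Code.eval_part.comp
      ((Computable.ofNat Code).comp (Computable.fst.comp .snd))
      (Computable.encode.comp (Computable.snd.comp .snd))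
  · exact Computable.ofOption (Computable.decode.comp .snd)

theorem ofOption_toOption (p : Part Str) [D : Decidable p.Dom] :
    Part.ofOption p.toOption = p := by
  unfold Part.toOption
  split
  · next h =>
    rw [Part.coe_some]
    exact Part.some_get h
  · next h =>
    rw [Part.coe_none]
    exact (Part.eq_none_iff'.2 h).symm

/-- The universal computer. -/
noncomputable def U : Computer := fun s => (fU s).toOption

theorem ofOption_U (s : Str) : Part.ofOption (U s) = fU s := ofOption_toOption _

/-- The aperiodic universal computer. -/
noncomputable def V : Computer := fun s =>
  Option.casesOn (parse s) (some []) (fun kt => U kt.2)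

theorem isPR_V : isPR V := by
  have h : ∀ s, Part.ofOption (V s)
      = Option.casesOn (parse s) (Part.some ([] : Str)) (fun kt => fU kt.2) := by
    intro s
    unfold V
    cases parse s with
    | none => rfl
    | some kt => exact ofOption_U kt.2
  have hp : Partrec fun s =>
      Option.casesOn (parse s) (Part.some ([] : Str)) (fun kt => fU kt.2) :=
    Partrec.optionCasesOn_right parse_primrec.to_comp (Computable.const ([] : Str))
      (fU_partrec.comp ((Computable.snd (α := ℕ) (β := Str)).comp
        (Computable.snd (α := Str) (β := ℕ × Str))))
  exact hp.of_eq fun s => (h s).symm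

theorem V_false (s : Str) : V (false :: s) = V s := by
  unfold V
  rw [parse_false]
  cases parse s <;> rfl

theorem V_true (s : Str) : V (true :: s) = U s := by
  have hp : parse (true :: s) = some (0, s) := by
    have := parse_replicate 0 s
    simpa using this
  unfold V
  rw [hp]

theorem U_emulates (M : Computer) (hM : isPR M) :
    ∃ x : Str, ∀ s : Str, U (x ++ s) = M s := by
  obtain ⟨c, hc⟩ := Nat.Partrec.Code.exists_code.1 hM
  refine ⟨List.replicate (Encodable.encode c) false ++ [true], fun s => ?_⟩
  have hfU : fU ((List.replicate (Encodable.encode c) false ++ [true]) ++ s)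
      = Part.ofOption (M s) := by
    unfold fU
    rw [List.append_assoc]
    simp only [List.singleton_append]
    rw [parse_replicate]
    rw [Part.coe_some, Part.bind_some, Denumerable.ofNat_encode, hc]
    cases h : M s <;> simp [Encodable.encodek, h]
  rw [show U ((List.replicate (Encodable.encode c) false ++ [true]) ++ s)
      = (fU _).toOption from rfl, hfU]
  cases h : M s <;> simp [Part.toOption, h]

theorem pathProbAux_pos (T : Set Str) (r : Str) : 0 < pathProbAux T r := by
  induction r with
  | nil => norm_num [pathProbAux]
  | cons b t ih =>
    rw [pathProbAux]
    split <;> [linarith; exact ih]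

theorem V_mem_XiU : V ∈ XiU := by
  refine ⟨isPR_V, fun M hM => ?_⟩
  obtain ⟨x, hx⟩ := U_emulates M hM
  exact ⟨true :: x, fun s => by rw [List.cons_append, V_true, hx]⟩

/-- `Ξ^U` is aperiodic: some universal computer `V` emulates itself via a single
bit, so `μ_V^{(1)}(V|Ξ^U) > 0`. -/
theorem xiU_aperiodic :
    ∃ V ∈ XiU, (∃ b : Bool, emulates V V [b]) ∧ 0 < nstep XiU V V 1 := by
  refine ⟨V, V_mem_XiU, ⟨false, fun s => V_false s⟩, ?_⟩
  have hshift : shiftC V [false] = V := funext fun s => V_false s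
  unfold nstep
  have hfin : Finite {x : Str // x.length = 1 ∧ shiftC V x = V} := by
    refine Finite.of_injective (fun x => (x : Str).headI) ?_
    intro u v huv
    obtain ⟨a, ha⟩ := List.length_eq_one_iff.1 u.2.1
    obtain ⟨b, hb⟩ := List.length_eq_one_iff.1 v.2.1
    apply Subtype.ext
    show u.val = v.val
    rw [show u.val = [a] from ha, show v.val = [b] from hb]
    have : a = b := by
      have h2 : List.headI (u.val) = List.headI (v.val) := huv
      rwa [show u.val = [a] from ha, show v.val = [b] from hb] at h2
    rw [this]
  have hsum : Summable fun x : {x : Str // x.length = 1 ∧ shiftC V x = V} =>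
      pathProb (tree XiU V) (x : Str) := by
    have := hfin
    exact Summable.of_finite
  refine Summable.tsum_pos hsum (fun i => le_of_lt (pathProbAux_pos _ _)) ⟨[false], by simp, hshift⟩
    (pathProbAux_pos _ _)
end

section
/- Output symmetry of the stationary distribution: if Φ is positive recurrent and closed under an output transformation σ and its inverse, then μ(C|Φ) = μ(σ∘C|Φ) for every C ∈ Φ, and μ(s|Φ) = μ(σ(s)|Φ) for every string s. -/
open scoped Classical

/-- `Φ` is positive recurrent with stationary distribution `μ`: `Φ` is branching
and irreducible, the `n`-step probabilities `μ_C^{(n)}(D|Φ)` converge to `μ D`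
independently of the starting computer `C`, the limits are strictly positive and
form a probability distribution on `Φ`. -/
structure PosRecurrent (Φ : Set Computer) (μ : Computer → ℝ) : Prop where
  branching : Branching Φ
  irreducible : ∀ C ∈ Φ, ∀ D ∈ Φ, emu C D
  tendsto : ∀ C ∈ Φ, ∀ D ∈ Φ,
    Filter.Tendsto (fun n => nstep Φ C D n) Filter.atTop (nhds (μ D))
  pos : ∀ D ∈ Φ, 0 < μ D
  sum_one : ∑' D : Φ, μ (D : Computer) = 1

/-- `2^{-k}` for an extended natural `k`, with `2^{-∞} = 0`. -/
noncomputable def twoPowNeg (k : ℕ∞) : ℝ := if k = ⊤ then 0 else (2 : ℝ)⁻¹ ^ k.toNat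

/-- Stationary string probability `μ(s|Φ)`: total stationary probability of the
computers in `Φ` whose output on the empty input is `s` (`s = none` meaning `∞`). -/
noncomputable def strProb (Φ : Set Computer) (μ : Computer → ℝ) (s : Option Str) : ℝ :=
  ∑' U : {U : Computer // U ∈ Φ ∧ U [] = s}, μ (U : Computer)

/-- Output transformation: `σ∘C` applies the permutation `σ` to the output of `C`. -/
def outT (σ : Equiv.Perm Str) (C : Computer) : Computer := fun x => (C x).map σ

lemma outT_symm_outT (σ : Equiv.Perm Str) (C : Computer) : outT σ.symm (outT σ C) = C := by
  funext x
  simp [outT, Option.map_map, Function.comp]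

lemma shiftC_outT (σ : Equiv.Perm Str) (C : Computer) (x : Str) :
    shiftC (outT σ C) x = outT σ (shiftC C x) := rfl

lemma outT_inj (σ : Equiv.Perm Str) : Function.Injective (outT σ) := by
  intro C D hCD
  have := congrArg (outT σ.symm) hCD
  rwa [outT_symm_outT, outT_symm_outT] at this

lemma tree_outT (Φ : Set Computer) (σ : Equiv.Perm Str)
    (h1 : ∀ C ∈ Φ, outT σ C ∈ Φ) (h2 : ∀ C ∈ Φ, outT σ.symm C ∈ Φ)
    (C : Computer) : tree Φ (outT σ C) = tree Φ C := by
  ext x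
  simp only [tree, Set.mem_setOf_eq, shiftC_outT]
  constructor
  · intro hx
    have := h2 _ hx
    rwa [outT_symm_outT] at this
  · exact fun hx => h1 _ hx

lemma nstep_outT (Φ : Set Computer) (σ : Equiv.Perm Str)
    (h1 : ∀ C ∈ Φ, outT σ C ∈ Φ) (h2 : ∀ C ∈ Φ, outT σ.symm C ∈ Φ)
    (C D : Computer) (n : ℕ) :
    nstep Φ (outT σ C) (outT σ D) n = nstep Φ C D n := by
  unfold nstep
  rw [tree_outT Φ σ h1 h2]
  let e : {x : Str // x.length = n ∧ shiftC C x = D} ≃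
      {x : Str // x.length = n ∧ shiftC (outT σ C) x = outT σ D} :=
    Equiv.subtypeEquivRight (by
      intro x
      simp only [shiftC_outT]
      exact ⟨fun ⟨hl, hs⟩ => ⟨hl, by rw [hs]⟩, fun ⟨hl, hs⟩ => ⟨hl, outT_inj σ hs⟩⟩)
  exact ((e.tsum_eq (fun x : {x : Str // x.length = n ∧ shiftC (outT σ C) x = outT σ D} =>
    pathProb (tree Φ C) (x : Str))).symm).trans (tsum_congr fun x => rfl)

/-- Output symmetry of the stationary distribution: if `Φ` is positive recurrent
and closed under the output transformation `σ` and its inverse, then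
`μ(C|Φ) = μ(σ∘C|Φ)` for every `C ∈ Φ` and `μ(s|Φ) = μ(σ(s)|Φ)` for every string `s`. -/
theorem output_symmetry (Φ : Set Computer) (μ : Computer → ℝ)
    (h : PosRecurrent Φ μ) (σ : Equiv.Perm Str)
    (h1 : ∀ C ∈ Φ, outT σ C ∈ Φ) (h2 : ∀ C ∈ Φ, outT σ.symm C ∈ Φ) :
    (∀ C ∈ Φ, μ C = μ (outT σ C)) ∧
    (∀ s : Str, strProb Φ μ (some s) = strProb Φ μ (some (σ s))) := by
  have part1 : ∀ C ∈ Φ, μ C = μ (outT σ C) := by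
    intro C hC
    have hC' : outT σ C ∈ Φ := h1 C hC
    have t1 := h.tendsto C hC C hC
    have t2 := h.tendsto (outT σ C) hC' (outT σ C) hC'
    have heq : (fun n => nstep Φ (outT σ C) (outT σ C) n) = fun n => nstep Φ C C n := by
      funext n; exact nstep_outT Φ σ h1 h2 C C n
    rw [heq] at t2
    exact tendsto_nhds_unique t1 t2
  refine ⟨part1, fun s => ?_⟩
  let e : {V : Computer // V ∈ Φ ∧ V [] = some s} ≃
      {U : Computer // U ∈ Φ ∧ U [] = some (σ s)} :=
    { toFun := fun V => ⟨outT σ V, h1 V V.2.1, by simp [outT, V.2.2]⟩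
      invFun := fun U => ⟨outT σ.symm U, h2 U U.2.1, by simp [outT, U.2.2]⟩
      left_inv := fun V => Subtype.ext (outT_symm_outT σ V)
      right_inv := fun U => Subtype.ext (by simpa using outT_symm_outT σ.symm U) }
  unfold strProb
  rw [← e.tsum_eq (fun U : {U : Computer // U ∈ Φ ∧ U [] = some (σ s)} => μ (U : Computer))]
  exact tsum_congr (fun V => part1 V V.2.1)
end
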